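/- A lattice Λ in R^2 generated by v_1, v_2 and a lattice Λ' generated by u_1, u_2 are related by a linear isometry (orthogonal map) if there is an orthogonal map R of R^2 with R(v_1) = u_1 and R(v_2) = u_2; conversely, given obtuse superbases (v_0,v_1,v_2) of Λ and (u_0,u_1,u_2) of Λ' with equal vonorms v_i² = u_i² for i = 0,1,2, there exists an orthogonal map R of R^2 with R(v_i) = ±u_i (up to a common permutation/sign), hence Λ and Λ' are isometric. -/

import Mathlib

open RealInnerProductSpace

section Aux

variable {E : Type*} [NormedAddCommGroup E] [InnerProductSpace ℝ E]

lemma aux_map_span (R : E ≃ₗᵢ[ℝ] E) (a b c d : E) (h1 : R a = c) (h2 : R b = d) :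
    R '' (Submodule.span ℤ ({a, b} : Set E) : Set E)
      = (Submodule.span ℤ ({c, d} : Set E) : Set E) := by
  have hf : ⇑R = ⇑((R.toLinearEquiv.restrictScalars ℤ).toLinearMap) := rfl
  rw [hf, ← Submodule.map_coe, Submodule.map_span]
  rw [Set.image_pair]
  simp [← hf, h1, h2]

lemma aux_isometry (v1 v2 u1 u2 : E)
    (hv : LinearIndependent ℝ ![v1, v2]) (hu : LinearIndependent ℝ ![u1, u2])
    (hrank : Module.finrank ℝ E = 2)
    (hg : ∀ i j : Fin 2, ⟪![v1, v2] i, ![v1, v2] j⟫ = ⟪![u1, u2] i, ![u1, u2] j⟫) :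
    ∃ R : E ≃ₗᵢ[ℝ] E, R v1 = u1 ∧ R v2 = u2 := by
  have hcard : Fintype.card (Fin 2) = Module.finrank ℝ E := by simp [hrank]
  let B := basisOfLinearIndependentOfCardEqFinrank hv hcard
  let C := basisOfLinearIndependentOfCardEqFinrank hu hcard
  have hB : ∀ i, B i = ![v1, v2] i := fun i => by
    simp [B, coe_basisOfLinearIndependentOfCardEqFinrank]
  have hC : ∀ i, C i = ![u1, u2] i := fun i => by
    simp [C, coe_basisOfLinearIndependentOfCardEqFinrank]
  let f := B.equiv C (Equiv.refl _)
  have hfB : ∀ i, f (B i) = C i := fun i => by simp [f, Module.Basis.equiv_apply]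
  have hinner : ∀ x y, ⟪f x, f y⟫ = ⟪x, y⟫ := by
    have key : (innerₗ E).compl₁₂ (f : E →ₗ[ℝ] E) (f : E →ₗ[ℝ] E) = innerₗ E := by
      apply B.ext; intro i
      apply B.ext; intro j
      simp only [LinearMap.compl₁₂_apply, LinearEquiv.coe_coe, hfB]
      rw [hB i, hB j, hC i, hC j]
      simp only [innerₗ_apply_apply]
      exact (hg i j).symm
    intro x y
    simpa using LinearMap.congr_fun (LinearMap.congr_fun key x) y
  refine ⟨f.isometryOfInner hinner, ?_, ?_⟩
  · have := hfB 0; rw [hB 0, hC 0] at this; simpa using this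
  · have := hfB 1; rw [hB 1, hC 1] at this; simpa using this

end Aux

/-- Lattices mapped to each other by an orthogonal map, and conversely:
obtuse superbases with equal vonorms give isometric lattices via an orthogonal
map sending each superbase vector to a common sign/permutation of the other. -/
theorem lattice_isometry_of_superbases
    (v u : Fin 3 → EuclideanSpace ℝ (Fin 2))
    (hv0 : v 0 = -v 1 - v 2) (hu0 : u 0 = -u 1 - u 2)
    (hvind : LinearIndependent ℝ ![v 1, v 2])
    (huind : LinearIndependent ℝ ![u 1, u 2])
    (hvobt : ∀ i j : Fin 3, i ≠ j → ⟪v i, v j⟫ ≤ 0)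
    (huobt : ∀ i j : Fin 3, i ≠ j → ⟪u i, u j⟫ ≤ 0) :
    (∀ R : EuclideanSpace ℝ (Fin 2) ≃ₗᵢ[ℝ] EuclideanSpace ℝ (Fin 2),
      R (v 1) = u 1 → R (v 2) = u 2 →
        R '' (Submodule.span ℤ ({v 1, v 2} : Set (EuclideanSpace ℝ (Fin 2))) : Set (EuclideanSpace ℝ (Fin 2)))
          = (Submodule.span ℤ ({u 1, u 2} : Set (EuclideanSpace ℝ (Fin 2))) : Set (EuclideanSpace ℝ (Fin 2)))) ∧
    ((∀ i, ⟪v i, v i⟫ = ⟪u i, u i⟫) →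
      ∃ R : EuclideanSpace ℝ (Fin 2) ≃ₗᵢ[ℝ] EuclideanSpace ℝ (Fin 2),
        ∃ ε : ℝ, (ε = 1 ∨ ε = -1) ∧ ∃ σ : Equiv.Perm (Fin 3),
          (∀ i, R (v i) = ε • u (σ i)) ∧
          R '' (Submodule.span ℤ ({v 1, v 2} : Set (EuclideanSpace ℝ (Fin 2))) : Set (EuclideanSpace ℝ (Fin 2)))
            = (Submodule.span ℤ ({u 1, u 2} : Set (EuclideanSpace ℝ (Fin 2))) : Set (EuclideanSpace ℝ (Fin 2)))) := by
  constructor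
  · intro R h1 h2
    exact aux_map_span R _ _ _ _ h1 h2
  · intro h
    -- off-diagonal inner products agree
    have hv12 : ⟪v 1, v 2⟫ = ⟪u 1, u 2⟫ := by
      have hv : ⟪v 0, v 0⟫ = ⟪v 1, v 1⟫ + 2 * ⟪v 1, v 2⟫ + ⟪v 2, v 2⟫ := by
        rw [hv0]
        simp [-inner_self_eq_norm_sq_to_K, inner_sub_sub_self, inner_neg_neg, inner_neg_left, inner_neg_right,
          real_inner_comm (v 2) (v 1)]
        ring
      have hu : ⟪u 0, u 0⟫ = ⟪u 1, u 1⟫ + 2 * ⟪u 1, u 2⟫ + ⟪u 2, u 2⟫ := by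
        rw [hu0]
        simp [-inner_self_eq_norm_sq_to_K, inner_sub_sub_self, inner_neg_neg, inner_neg_left, inner_neg_right,
          real_inner_comm (u 2) (u 1)]
        ring
      have h0 := h 0; have h1 := h 1; have h2 := h 2
      rw [hv, hu] at h0
      linarith
    have hg : ∀ i j : Fin 2,
        ⟪![v 1, v 2] i, ![v 1, v 2] j⟫ = ⟪![u 1, u 2] i, ![u 1, u 2] j⟫ := by
      intro i j
      fin_cases i <;> fin_cases j
      · simpa using h 1
      · simpa using hv12
      · show ⟪v 2, v 1⟫ = ⟪u 2, u 1⟫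
        rw [real_inner_comm (v 1) (v 2), real_inner_comm (u 1) (u 2)]
        exact hv12
      · simpa using h 2
    obtain ⟨R, hR1, hR2⟩ := aux_isometry (v 1) (v 2) (u 1) (u 2) hvind huind (by simp) hg
    refine ⟨R, 1, Or.inl rfl, 1, ?_, aux_map_span R _ _ _ _ hR1 hR2⟩
    have h0 : R (v 0) = u 0 := by
      rw [hv0, hu0]; simp [map_sub, map_neg, hR1, hR2]
    intro i
    fin_cases i <;> simp [h0, hR1, hR2, Equiv.Perm.one_apply]
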